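/- In the group G with presentation ⟨X, Y, Z | [X,Y] = 1, Z⁻¹XZ = XY, Z⁻¹YZ = X⁻¹⟩ (the fundamental group of the hexacosm c6), the abelianization is isomorphic to Z. -/

import Mathlib

/-- Relators of the fundamental group of the hexacosm `c6`:
generators `X = of 0`, `Y = of 1`, `Z = of 2`, relations
`[X,Y] = 1`, `Z⁻¹XZ = XY`, `Z⁻¹YZ = X⁻¹`. -/
def c6Rels : Set (FreeGroup (Fin 3)) :=
  { (FreeGroup.of 0)⁻¹ * (FreeGroup.of 1)⁻¹ * FreeGroup.of 0 * FreeGroup.of 1,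
    (FreeGroup.of 2)⁻¹ * FreeGroup.of 0 * FreeGroup.of 2 *
      (FreeGroup.of 0 * FreeGroup.of 1)⁻¹,
    (FreeGroup.of 2)⁻¹ * FreeGroup.of 1 * FreeGroup.of 2 * FreeGroup.of 0 }

private def gmap : Fin 3 → Multiplicative ℤ :=
  ![1, 1, Multiplicative.ofAdd 1]

private lemma gmap_rels : ∀ r ∈ c6Rels, FreeGroup.lift gmap r = 1 := by
  intro r hr
  rcases hr with h | h | h <;> subst h <;>
    simp [gmap, mul_assoc]

private lemma rel_one {r : FreeGroup (Fin 3)} (hr : r ∈ c6Rels) :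
    PresentedGroup.mk c6Rels r = 1 := by
  have : r ∈ Subgroup.normalClosure c6Rels := Subgroup.subset_normalClosure hr
  exact (QuotientGroup.eq_one_iff r).2 this

private noncomputable abbrev ab : PresentedGroup c6Rels →*
    Abelianization (PresentedGroup c6Rels) := Abelianization.of

private lemma hy : ab (PresentedGroup.of 1) = 1 := by
  have h2 : PresentedGroup.mk c6Rels ((FreeGroup.of 2)⁻¹ * FreeGroup.of 0 * FreeGroup.of 2 *
      (FreeGroup.of 0 * FreeGroup.of 1)⁻¹) = 1 :=
    rel_one (by right; left; rfl)
  have := congrArg ab h2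
  simp only [map_mul, map_inv, map_one] at this
  have hx := this
  -- in the abelianization everything commutes
  set x := ab (PresentedGroup.mk c6Rels (FreeGroup.of 0)) with hxdef
  set y := ab (PresentedGroup.mk c6Rels (FreeGroup.of 1)) with hydef
  set z := ab (PresentedGroup.mk c6Rels (FreeGroup.of 2)) with hzdef
  have e : z⁻¹ * x * z * (x * y)⁻¹ = y⁻¹ := by
    rw [mul_comm z⁻¹ x, mul_assoc x z⁻¹ z, inv_mul_cancel, mul_one, mul_inv, ← mul_assoc,
      mul_inv_cancel, one_mul]
  rw [e] at this
  exact inv_eq_one.mp this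

private lemma hx : ab (PresentedGroup.of 0) = 1 := by
  have h3 : PresentedGroup.mk c6Rels ((FreeGroup.of 2)⁻¹ * FreeGroup.of 1 * FreeGroup.of 2 *
      FreeGroup.of 0) = 1 :=
    rel_one (by right; right; rfl)
  have := congrArg ab h3
  simp only [map_mul, map_inv, map_one] at this
  set x := ab (PresentedGroup.mk c6Rels (FreeGroup.of 0)) with hxdef
  set y := ab (PresentedGroup.mk c6Rels (FreeGroup.of 1)) with hydef
  set z := ab (PresentedGroup.mk c6Rels (FreeGroup.of 2)) with hzdef
  have hy1 : y = 1 := hy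
  rw [hy1] at this
  have : z⁻¹ * z * x = 1 := by rwa [mul_one] at this
  rwa [inv_mul_cancel, one_mul] at this

/-- The abelianization of the hexacosm group
`⟨X, Y, Z | [X,Y] = 1, Z⁻¹XZ = XY, Z⁻¹YZ = X⁻¹⟩` is `ℤ`. -/
theorem c6_abelianization :
    Nonempty (Abelianization (PresentedGroup c6Rels) ≃* Multiplicative ℤ) := by
  classical
  let f : PresentedGroup c6Rels →* Multiplicative ℤ := PresentedGroup.toGroup gmap_rels
  let φ : Abelianization (PresentedGroup c6Rels) →* Multiplicative ℤ :=
    Abelianization.lift f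
  let ψ : Multiplicative ℤ →* Abelianization (PresentedGroup c6Rels) :=
    zpowersHom _ (ab (PresentedGroup.of 2))
  refine ⟨MonoidHom.toMulEquiv φ ψ ?_ ?_⟩
  · apply Abelianization.hom_ext
    apply PresentedGroup.ext
    intro i
    fin_cases i <;>
      simp only [MonoidHom.comp_apply, MonoidHom.id_apply, Abelianization.lift_apply_of,
        Fin.isValue, φ, ψ, f]
    · rw [show ((⟨0, by norm_num⟩ : Fin 3)) = (0 : Fin 3) from rfl]
      rw [PresentedGroup.toGroup.of]
      simp [gmap, hx]
    · rw [show ((⟨1, by norm_num⟩ : Fin 3)) = (1 : Fin 3) from rfl]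
      rw [PresentedGroup.toGroup.of]
      simp [gmap, hy]
    · rw [show ((⟨2, by norm_num⟩ : Fin 3)) = (2 : Fin 3) from rfl]
      rw [PresentedGroup.toGroup.of]
      simp [gmap]
  · apply MonoidHom.ext_mint
    simp only [MonoidHom.comp_apply, MonoidHom.id_apply, ψ, φ, f]
    rw [zpowersHom_apply, toAdd_ofAdd, zpow_one, Abelianization.lift_apply_of, PresentedGroup.toGroup.of]
    simp [gmap]
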